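/- Equivalence of λ•→ and its syntax-directed variant (λ•→)⁻: a judgement Γ ⊢ e : t is derivable in (λ•→)⁻ if and only if it is derivable in λ•→. -/

import Mathlib

namespace LambdaBullet

/-- Head constructors for pseudo-types. -/
inductive TyHead : Type
  | var (n : ℕ)
  | nat
  | prod
  | arrow
  | bullet

/-- Arity of each pseudo-type constructor. -/
def tyArity : TyHead → Type
  | .var _ => Empty
  | .nat => Empty
  | .prod => Bool
  | .arrow => Bool
  | .bullet => Unit

/-- The polynomial functor whose M-type is the type of pseudo-types. -/
def TyP : PFunctor := ⟨TyHead, tyArity⟩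

/-- Pseudo-types: possibly infinite coinductively generated trees. -/
abbrev PseudoType := TyP.M

/-- Type variable. -/
def tvar (n : ℕ) : PseudoType := PFunctor.M.mk ⟨TyHead.var n, Empty.elim⟩
/-- The type `Nat`. -/
def tnat : PseudoType := PFunctor.M.mk ⟨TyHead.nat, Empty.elim⟩
/-- Product type. -/
def tprod (t s : PseudoType) : PseudoType :=
  PFunctor.M.mk ⟨TyHead.prod, fun b => bif b then s else t⟩
/-- Arrow type. -/
def tarrow (t s : PseudoType) : PseudoType :=
  PFunctor.M.mk ⟨TyHead.arrow, fun b => bif b then s else t⟩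
/-- Delay type `•t`. -/
def tbullet (t : PseudoType) : PseudoType :=
  PFunctor.M.mk ⟨TyHead.bullet, fun _ => t⟩
/-- Iterated delay `•ⁿ t`. -/
def tbulletN (n : ℕ) (t : PseudoType) : PseudoType := tbullet^[n] t

/-- `Child t s` holds iff `s` is an immediate subtree of `t`. -/
def Child (t s : PseudoType) : Prop := ∃ b : TyP.B t.dest.1, t.dest.2 b = s

/-- `Subtree t s` holds iff `s` is a subtree of `t`. -/
def Subtree (t s : PseudoType) : Prop := Relation.ReflTransGen Child t s

/-- A pseudo-type is regular if it has finitely many distinct subtrees. -/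
def Regular (t : PseudoType) : Prop := {s | Subtree t s}.Finite

/-- The root of the tree is a `•`. -/
def headIsBullet (t : PseudoType) : Prop := t.dest.1 = TyHead.bullet

/-- A pseudo-type is guarded if every infinite path in its tree has
infinitely many `•`'s. -/
def Guarded (t : PseudoType) : Prop :=
  ∀ f : ℕ → PseudoType, f 0 = t → (∀ n, Child (f n) (f (n + 1))) →
    ∀ N, ∃ n, N ≤ n ∧ headIsBullet (f n)

/-- A type is a regular and guarded pseudo-type. -/
def IsType (t : PseudoType) : Prop := Regular t ∧ Guarded t

/-- `•^∞`: the unique pseudo-type satisfying `•^∞ = • •^∞`. -/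
def binf : PseudoType := PFunctor.M.corec (fun _ : Unit => ⟨TyHead.bullet, fun _ => ()⟩) ()

/-- Constants. -/
inductive Const : Type
  | pair
  | cfst
  | csnd
  | zero
  | succ

/-- Expressions (with de Bruijn indices for variables). -/
inductive Expr : Type
  | var (x : ℕ)
  | const (k : Const)
  | lam (e : Expr)
  | app (e₁ e₂ : Expr)

def liftRen (f : ℕ → ℕ) : ℕ → ℕ
  | 0 => 0
  | n + 1 => f n + 1

def rename (f : ℕ → ℕ) : Expr → Expr
  | .var n => .var (f n)
  | .const k => .const k
  | .lam e => .lam (rename (liftRen f) e)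
  | .app a b => .app (rename f a) (rename f b)

def liftSub (ρ : ℕ → Expr) : ℕ → Expr
  | 0 => .var 0
  | n + 1 => rename Nat.succ (ρ n)

/-- Simultaneous (capture-avoiding) substitution. -/
def substE (ρ : ℕ → Expr) : Expr → Expr
  | .var n => ρ n
  | .const k => .const k
  | .lam e => .lam (substE (liftSub ρ) e)
  | .app a b => .app (substE ρ a) (substE ρ b)

/-- `subst0 e f` is `e[f/x]` for the topmost variable `x`. -/
def subst0 (e f : Expr) : Expr :=
  substE (fun n => match n with | 0 => f | n + 1 => .var n) e

/-- The pair `⟨e₁, e₂⟩`. -/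
def mkPair (e₁ e₂ : Expr) : Expr := .app (.app (.const .pair) e₁) e₂

/-- Evaluation contexts E ::= [] | E e | fst E | snd E | succ E. -/
inductive ECtx : Type
  | hole
  | app (E : ECtx) (e : Expr)
  | fst (E : ECtx)
  | snd (E : ECtx)
  | succ (E : ECtx)

/-- Plugging an expression into an evaluation context. -/
def ECtx.plug : ECtx → Expr → Expr
  | .hole, e => e
  | .app E f, e => .app (E.plug e) f
  | .fst E, e => .app (.const .cfst) (E.plug e)
  | .snd E, e => .app (.const .csnd) (E.plug e)
  | .succ E, e => .app (.const .succ) (E.plug e)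

/-- Head reduction rules. -/
inductive HeadRed : Expr → Expr → Prop
  | beta (e f) : HeadRed (.app (.lam e) f) (subst0 e f)
  | fst (e₁ e₂) : HeadRed (.app (.const .cfst) (mkPair e₁ e₂)) e₁
  | snd (e₁ e₂) : HeadRed (.app (.const .csnd) (mkPair e₁ e₂)) e₂

/-- Weak head (call-by-name) reduction: head rules closed under evaluation contexts. -/
def Red (a b : Expr) : Prop :=
  ∃ (E : ECtx) (e f : Expr), HeadRed e f ∧ a = E.plug e ∧ b = E.plug f

/-- Many-step reduction. -/
def RedStar : Expr → Expr → Prop := Relation.ReflTransGen Red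

/-- (Weak head) normal forms. -/
def NormalForm (e : Expr) : Prop := ∀ f, ¬ Red e f

/-- Typing contexts: finite maps from (de Bruijn) variables to types. -/
def Ctx : Type := ℕ → Option PseudoType

/-- Extending a typing context with a type for the topmost variable. -/
def Ctx.cons (t : PseudoType) (Γ : Ctx) : Ctx :=
  fun n => match n with | 0 => some t | n + 1 => Γ n

/-- The type assignment κ for constants. -/
inductive KappaTy : Const → PseudoType → Prop
  | pair {t s} : IsType t → IsType s →
      KappaTy .pair (tarrow t (tarrow s (tprod t s)))
  | fst {t s} : IsType t → IsType s →
      KappaTy .cfst (tarrow (tprod t s) t)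
  | snd {t s} : IsType t → IsType s →
      KappaTy .csnd (tarrow (tprod t s) s)
  | zero : KappaTy .zero tnat
  | succ : KappaTy .succ (tarrow tnat tnat)

/-- The type assignment system λ•→. -/
inductive Types : Ctx → Expr → PseudoType → Prop
  | ax {Γ x t} : Γ x = some t → IsType t → Types Γ (.var x) t
  | const {Γ k t} : KappaTy k t → Types Γ (.const k) t
  | bulletI {Γ e t} : Types Γ e t → Types Γ e (tbullet t)
  | arrowI {Γ e n t s} :
      Types (Ctx.cons (tbulletN n t) Γ) e (tbulletN n s) →
      Types Γ (.lam e) (tbulletN n (tarrow t s))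
  | arrowE {Γ e₁ e₂ n t s} :
      Types Γ e₁ (tbulletN n (tarrow t s)) → Types Γ e₂ (tbulletN n t) →
      Types Γ (.app e₁ e₂) (tbulletN n s)


/-- The syntax-directed type assignment system (λ•→)⁻: the rule (•I) is
removed and the `•`'s are introduced in the rules (axiom) and (const). -/
inductive TypesSD : Ctx → Expr → PseudoType → Prop
  | ax {Γ x t} (n : ℕ) : Γ x = some t → IsType t →
      TypesSD Γ (.var x) (tbulletN n t)
  | const {Γ k t} (n : ℕ) : KappaTy k t →
      TypesSD Γ (.const k) (tbulletN n t)
  | arrowI {Γ e n t s} :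
      TypesSD (Ctx.cons (tbulletN n t) Γ) e (tbulletN n s) →
      TypesSD Γ (.lam e) (tbulletN n (tarrow t s))
  | arrowE {Γ e₁ e₂ n t s} :
      TypesSD Γ e₁ (tbulletN n (tarrow t s)) → TypesSD Γ e₂ (tbulletN n t) →
      TypesSD Γ (.app e₁ e₂) (tbulletN n s)

-- Auxiliary lemmas ---------------------------------------------------------

lemma tbulletN_succ (n : ℕ) (t : PseudoType) :
    tbulletN (n+1) t = tbulletN n (tbullet t) :=
  Function.iterate_succ_apply tbullet n t

lemma tbulletN_succ' (n : ℕ) (t : PseudoType) :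
    tbulletN (n+1) t = tbullet (tbulletN n t) :=
  Function.iterate_succ_apply' tbullet n t

lemma tbulletN_add (n m : ℕ) (t : PseudoType) :
    tbulletN n (tbulletN m t) = tbulletN (n+m) t :=
  (Function.iterate_add_apply tbullet n m t).symm

lemma child_tbullet {t s : PseudoType} : Child (tbullet t) s ↔ s = t := by
  unfold Child tbullet
  erw [PFunctor.M.dest_mk]
  constructor
  · rintro ⟨b, h⟩; exact h.symm
  · rintro rfl; exact ⟨(), rfl⟩

lemma headIsBullet_tbullet (t : PseudoType) : headIsBullet (tbullet t) := by
  unfold headIsBullet tbullet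
  erw [PFunctor.M.dest_mk]

lemma subtree_tbullet_self (t : PseudoType) : Subtree (tbullet t) t :=
  Relation.ReflTransGen.single (child_tbullet.mpr rfl)

lemma isType_tbullet {t : PseudoType} (h : IsType t) : IsType (tbullet t) := by
  obtain ⟨hr, hg⟩ := h
  constructor
  · have hsub : {s | Subtree (tbullet t) s} ⊆ insert (tbullet t) {s | Subtree t s} := by
      intro s hs
      rcases (Relation.ReflTransGen.cases_head hs) with rfl | ⟨c, hc, hcs⟩
      · exact Or.inl rfl
      · right
        rw [child_tbullet.mp hc] at hcs
        exact hcs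
    exact Set.Finite.subset (hr.insert _) hsub
  · intro f hf0 hstep N
    cases N with
    | zero => exact ⟨0, le_refl _, hf0 ▸ headIsBullet_tbullet t⟩
    | succ N =>
      have hf1 : f 1 = t := by
        have h0 := hstep 0
        rw [hf0] at h0
        exact child_tbullet.mp h0
      obtain ⟨n, hn, hb⟩ := hg (fun n => f (n+1)) hf1 (fun n => hstep (n+1)) N
      exact ⟨n+1, Nat.succ_le_succ hn, hb⟩

lemma isType_of_tbullet {t : PseudoType} (h : IsType (tbullet t)) : IsType t := by
  obtain ⟨hr, hg⟩ := h
  constructor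
  · apply hr.subset
    intro s hs
    exact Relation.ReflTransGen.trans (subtree_tbullet_self t) hs
  · intro f hf0 hstep N
    set g : ℕ → PseudoType := fun n => match n with | 0 => tbullet t | n+1 => f n with hgdef
    have hgstep : ∀ n, Child (g n) (g (n+1)) := by
      intro n
      cases n with
      | zero =>
        show Child (tbullet t) (f 0)
        rw [hf0]
        exact child_tbullet.mpr rfl
      | succ n => exact hstep n
    obtain ⟨n, hn, hb⟩ := hg g rfl hgstep (N+1)
    cases n with
    | zero => omega
    | succ n => exact ⟨n, by omega, hb⟩

lemma isType_tbulletN {t : PseudoType} (m : ℕ) (h : IsType t) :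
    IsType (tbulletN m t) := by
  induction m with
  | zero => exact h
  | succ m ih => rw [tbulletN_succ']; exact isType_tbullet ih

lemma isType_of_tbulletN {t : PseudoType} {m : ℕ} (h : IsType (tbulletN m t)) :
    IsType t := by
  induction m with
  | zero => exact h
  | succ m ih =>
    rw [tbulletN_succ'] at h
    exact ih (isType_of_tbullet h)

lemma types_tbulletN {Γ : Ctx} {e : Expr} {t : PseudoType} (n : ℕ)
    (h : Types Γ e t) : Types Γ e (tbulletN n t) := by
  induction n with
  | zero => exact h
  | succ n ih => rw [tbulletN_succ']; exact Types.bulletI ih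

/-- Bullet every entry of a context. -/
def bctx (Γ : Ctx) : Ctx := fun x => (Γ x).map tbullet

lemma bctx_cons (t : PseudoType) (Γ : Ctx) :
    bctx (Ctx.cons t Γ) = Ctx.cons (tbullet t) (bctx Γ) := by
  funext n
  cases n with
  | zero => rfl
  | succ n => rfl

lemma sd_bullet_ctx {Γ : Ctx} {e : Expr} {t : PseudoType}
    (h : TypesSD Γ e t) : TypesSD (bctx Γ) e (tbullet t) := by
  induction h with
  | @ax Γ x t n hx ht =>
    have h1 : TypesSD (bctx Γ) (.var x) (tbulletN n (tbullet t)) :=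
      TypesSD.ax n (by simp [bctx, hx]) (isType_tbullet ht)
    rwa [← tbulletN_succ, tbulletN_succ'] at h1
  | @const Γ k t n hk =>
    have h1 : TypesSD (bctx Γ) (.const k) (tbulletN (n+1) t) :=
      TypesSD.const (n+1) hk
    rwa [tbulletN_succ'] at h1
  | @arrowI Γ e n t s hp ih =>
    rw [bctx_cons, ← tbulletN_succ'] at ih
    rw [← tbulletN_succ'] at ih ⊢
    exact TypesSD.arrowI ih
  | @arrowE Γ e₁ e₂ n t s h1 h2 ih1 ih2 =>
    rw [← tbulletN_succ'] at ih1 ih2 ⊢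
    exact TypesSD.arrowE ih1 ih2

/-- `Γ'` is pointwise a "less-bulleted" version of `Γ`. -/
def CtxLe (Γ' Γ : Ctx) : Prop :=
  ∀ x, Γ' x = Γ x ∨ ∃ s m, Γ' x = some s ∧ Γ x = some (tbulletN m s)

lemma ctxLe_cons {Γ' Γ : Ctx} (u : PseudoType) (h : CtxLe Γ' Γ) :
    CtxLe (Ctx.cons u Γ') (Ctx.cons u Γ) := by
  intro x
  cases x with
  | zero => exact Or.inl rfl
  | succ x => exact h x

lemma sd_ctxLe {Γ : Ctx} {e : Expr} {t : PseudoType}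
    (h : TypesSD Γ e t) : ∀ Γ', CtxLe Γ' Γ → TypesSD Γ' e t := by
  induction h with
  | @ax Γ x t n hx ht =>
    intro Γ' hle
    rcases hle x with heq | ⟨s, m, h1, h2⟩
    · exact TypesSD.ax n (heq.trans hx) ht
    · rw [hx] at h2
      injection h2 with h2
      subst h2
      have h3 : TypesSD Γ' (.var x) (tbulletN (n+m) s) :=
        TypesSD.ax (n+m) h1 (isType_of_tbulletN ht)
      rwa [← tbulletN_add] at h3
  | @const Γ k t n hk => intro Γ' _; exact TypesSD.const n hk
  | @arrowI Γ e n t s hp ih =>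
    intro Γ' hle
    exact TypesSD.arrowI (ih _ (ctxLe_cons _ hle))
  | @arrowE Γ e₁ e₂ n t s h1 h2 ih1 ih2 =>
    intro Γ' hle
    exact TypesSD.arrowE (ih1 _ hle) (ih2 _ hle)

lemma ctxLe_bctx (Γ : Ctx) : CtxLe Γ (bctx Γ) := by
  intro x
  cases h : Γ x with
  | none => left; simp [bctx, h]
  | some u =>
    right
    exact ⟨u, 1, rfl, by simp [bctx, h, tbulletN]⟩

/-- Admissibility of (•I) in the syntax-directed system. -/
lemma sd_bulletI {Γ : Ctx} {e : Expr} {t : PseudoType}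
    (h : TypesSD Γ e t) : TypesSD Γ e (tbullet t) :=
  sd_ctxLe (sd_bullet_ctx h) Γ (ctxLe_bctx Γ)

/-- Equivalence of λ•→ and (λ•→)⁻: `Γ ⊢ e : t` is derivable
in (λ•→)⁻ iff it is derivable in λ•→. -/
theorem sd_equivalence (Γ : Ctx) (e : Expr) (t : PseudoType) :
    TypesSD Γ e t ↔ Types Γ e t := by
  constructor
  · intro h
    induction h with
    | ax n hx ht => exact types_tbulletN n (Types.ax hx ht)
    | const n hk => exact types_tbulletN n (Types.const hk)
    | arrowI hp ih => exact Types.arrowI ih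
    | arrowE h1 h2 ih1 ih2 => exact Types.arrowE ih1 ih2
  · intro h
    induction h with
    | ax hx ht => exact TypesSD.ax 0 hx ht
    | const hk => exact TypesSD.const 0 hk
    | bulletI hp ih => exact sd_bulletI ih
    | arrowI hp ih => exact TypesSD.arrowI ih
    | arrowE h1 h2 ih1 ih2 => exact TypesSD.arrowE ih1 ih2

end LambdaBullet
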